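/- Let U ⊆ ℂ be open and connected, m n : ℕ, and let M : ℂ → Matrix (Fin m) (Fin n) ℂ be such that every entry function μ ↦ M μ i j is analytic on U (AnalyticOnNhd ℂ). Let v : Fin n → ℂ be nonzero with M μ *ᵥ v = 0 for all μ ∈ U, and suppose there exists μ₀ ∈ U such that the kernel {w : Fin n → ℂ | M μ₀ *ᵥ w = 0} equals the one-dimensional subspace Submodule.span ℂ {v} (as a set). Then for every μ ∈ U, eventually for ν in the punctured neighborhood filter 𝓝[≠] μ, the kernel {w | M ν *ᵥ w = 0} equals Submodule.span ℂ {v}; i.e., except for a set with no accumulation point in U, the kernel of M μ is exactly the line spanned by v. -/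

import Mathlib

open Matrix

theorem kernel_generically_one_dimensional
    (U : Set ℂ) (hU : IsOpen U) (hUconn : IsConnected U)
    (m n : ℕ) (M : ℂ → Matrix (Fin m) (Fin n) ℂ)
    (hM : ∀ i j, AnalyticOnNhd ℂ (fun μ => M μ i j) U)
    (v : Fin n → ℂ) (hv : v ≠ 0)
    (hMv : ∀ μ ∈ U, M μ *ᵥ v = 0)
    (μ₀ : ℂ) (hμ₀ : μ₀ ∈ U)
    (hker : {w : Fin n → ℂ | M μ₀ *ᵥ w = 0} = (Submodule.span ℂ {v} : Set (Fin n → ℂ))) :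
    ∀ μ ∈ U, ∀ᶠ ν in nhdsWithin μ {μ}ᶜ,
      {w : Fin n → ℂ | M ν *ᵥ w = 0} = (Submodule.span ℂ {v} : Set (Fin n → ℂ)) := by
  -- choose a coordinate where v is nonzero
  obtain ⟨k, hk⟩ : ∃ k, v k ≠ 0 := Function.ne_iff.mp hv
  -- augmented matrix: rows of M μ plus the row e_k
  set N : ℂ → Matrix (Fin (m + 1)) (Fin n) ℂ :=
    fun μ => Matrix.of fun i j =>
      Fin.lastCases (if j = k then (1:ℂ) else 0) (fun i' => M μ i' j) i with hNdef
  have hNlast : ∀ μ (w : Fin n → ℂ), (N μ *ᵥ w) (Fin.last m) = w k := by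
    intro μ w
    simp only [mulVec, dotProduct, hNdef, Matrix.of_apply, Fin.lastCases_last]
    simp
  have hNcast : ∀ μ (w : Fin n → ℂ) (i : Fin m),
      (N μ *ᵥ w) (Fin.castSucc i) = (M μ *ᵥ w) i := by
    intro μ w i
    simp only [mulVec, dotProduct, hNdef, Matrix.of_apply, Fin.lastCases_castSucc]
  -- kernel of N μ₀ is trivial
  have hN0 : ∀ w : Fin n → ℂ, N μ₀ *ᵥ w = 0 → w = 0 := by
    intro w hw
    have hwk : w k = 0 := by
      have := congrFun hw (Fin.last m); rwa [hNlast] at this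
    have hwM : M μ₀ *ᵥ w = 0 := by
      funext i
      have := congrFun hw (Fin.castSucc i)
      rw [hNcast] at this; exact this
    have hwmem : w ∈ (Submodule.span ℂ {v} : Set (Fin n → ℂ)) := by
      rw [← hker]; exact hwM
    obtain ⟨c, rfl⟩ := Submodule.mem_span_singleton.mp hwmem
    have : c * v k = 0 := hwk
    have hc : c = 0 := by
      rcases mul_eq_zero.mp this with h | h
      · exact h
      · exact absurd h hk
    simp [hc]
  -- left inverse Q of N μ₀
  have hinj : LinearMap.ker (Matrix.toLin' (N μ₀)) = ⊥ := by
    rw [LinearMap.ker_eq_bot']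
    intro w hw
    exact hN0 w (by simpa [Matrix.toLin'_apply] using hw)
  obtain ⟨g, hg⟩ := (Matrix.toLin' (N μ₀)).exists_leftInverse_of_injective hinj
  set Q : Matrix (Fin n) (Fin (m + 1)) ℂ := LinearMap.toMatrix' g with hQdef
  set f : ℂ → ℂ := fun μ => (Q * N μ).det with hfdef
  have hfμ₀ : f μ₀ = 1 := by
    have : Q * N μ₀ = 1 := by
      rw [hQdef, ← LinearMap.toMatrix'_toLin' (N μ₀), ← LinearMap.toMatrix'_comp, hg,
        LinearMap.toMatrix'_id]
    simp [hfdef, this]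
  -- entries of Q * N μ are analytic on U
  have hentry : ∀ (a : Fin n) (b : Fin n), AnalyticOnNhd ℂ (fun μ => (Q * N μ) a b) U := by
    intro a b
    have : (fun μ => (Q * N μ) a b) = fun μ => ∑ c, Q a c * N μ c b := by
      funext μ; simp [Matrix.mul_apply]
    rw [this]
    apply Finset.analyticOnNhd_fun_sum
    intro c _
    apply AnalyticOnNhd.mul analyticOnNhd_const
    refine Fin.lastCases ?_ ?_ c
    · simp only [hNdef, Matrix.of_apply, Fin.lastCases_last]
      exact analyticOnNhd_const
    · intro i
      simp only [hNdef, Matrix.of_apply, Fin.lastCases_castSucc]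
      exact hM i b
  -- f is analytic on U
  have hf : AnalyticOnNhd ℂ f U := by
    have : f = fun μ => ∑ σ : Equiv.Perm (Fin n),
        Equiv.Perm.sign σ • ∏ i, (Q * N μ) (σ i) i := by
      funext μ; rw [hfdef]; exact Matrix.det_apply _
    rw [this]
    apply Finset.analyticOnNhd_fun_sum
    intro σ _
    have : (fun μ => Equiv.Perm.sign σ • ∏ i, (Q * N μ) (σ i) i)
        = fun μ => ((Equiv.Perm.sign σ : ℤ) : ℂ) * ∏ i, (Q * N μ) (σ i) i := by
      funext μ; simp [Units.smul_def, zsmul_eq_mul]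
    rw [this]
    apply AnalyticOnNhd.mul analyticOnNhd_const
    exact Finset.analyticOnNhd_fun_prod _ fun i _ => hentry (σ i) i
  -- f is eventually nonzero in punctured neighborhoods
  intro μ hμ
  have hne : ∀ᶠ ν in nhdsWithin μ {μ}ᶜ, f ν ≠ 0 := by
    rcases (hf μ hμ).eventually_eq_zero_or_eventually_ne_zero with h | h
    · exfalso
      have : Set.EqOn f 0 U := by
        apply hf.eqOn_zero_of_preconnected_of_frequently_eq_zero hUconn.isPreconnected hμ
        exact h.filter_mono nhdsWithin_le_nhds |>.frequently
      have := this hμ₀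
      rw [hfμ₀] at this
      exact one_ne_zero this
    · exact h
  have hUev : ∀ᶠ ν in nhdsWithin μ {μ}ᶜ, ν ∈ U :=
    eventually_nhdsWithin_of_eventually_nhds (hU.eventually_mem hμ)
  filter_upwards [hne, hUev] with ν hfν hνU
  ext w
  simp only [Set.mem_setOf_eq, SetLike.mem_coe]
  constructor
  · intro hw
    -- w - (w k / v k) • v is in the kernel of N ν, hence zero
    set c : ℂ := w k / v k with hc
    have hw' : N ν *ᵥ (w - c • v) = 0 := by
      funext i
      refine Fin.lastCases ?_ ?_ i
      · rw [hNlast]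
        simp only [Pi.sub_apply, Pi.smul_apply, smul_eq_mul, hc]
        field_simp
        simp
      · intro i'
        rw [hNcast]
        have : M ν *ᵥ (w - c • v) = M ν *ᵥ w - c • (M ν *ᵥ v) := by
          rw [Matrix.mulVec_sub, Matrix.mulVec_smul]
        rw [this, hw, hMv ν hνU]
        simp
    have hz_aux0 : (Q * N ν) *ᵥ (w - c • v) = 0 := by
      rw [← Matrix.mulVec_mulVec, hw']
      simp
    have hz_aux : w - c • v = 0 := Matrix.eq_zero_of_mulVec_eq_zero hfν hz_aux0
    have hz : w = c • v := sub_eq_zero.mp hz_aux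
    exact Submodule.mem_span_singleton.mpr ⟨c, hz.symm⟩
  · intro hw
    obtain ⟨c, rfl⟩ := Submodule.mem_span_singleton.mp hw
    rw [Matrix.mulVec_smul, hMv ν hνU]
    simp
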